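/- Let G and H be abelian groups, let g be an additive relation between G and H with coker g finite and im g of finite index in H, and let f be an additive relation between G and H with ker f finite and dom f of finite index in G. If H₁ ≤ H₂ are subgroups of H with H₁ of infinite index in H₂, then the subgroup f[g⁻¹[H₁]] has infinite index in f[g⁻¹[H₂]]. -/

import Mathlib

namespace QH

variable {G H : Type*} [AddCommGroup G] [AddCommGroup H]

def dom (R : AddSubgroup (G × H)) : AddSubgroup G := R.map (AddMonoidHom.fst G H)

def img (R : AddSubgroup (G × H)) : AddSubgroup H := R.map (AddMonoidHom.snd G H)

def ker (R : AddSubgroup (G × H)) : AddSubgroup G := R.comap (AddMonoidHom.inl G H)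

def coker (R : AddSubgroup (G × H)) : AddSubgroup H := R.comap (AddMonoidHom.inr G H)

/-- `g⁻¹[B] = {a ∈ G : ∃ b ∈ B, (a,b) ∈ g}`. -/
def relPreimg (g : AddSubgroup (G × H)) (B : AddSubgroup H) : AddSubgroup G :=
  dom (g ⊓ (⊤ : AddSubgroup G).prod B)

/-- `g[A] = {h ∈ H : ∃ a ∈ A, (a,h) ∈ g}`. -/
def relImg (g : AddSubgroup (G × H)) (A : AddSubgroup G) : AddSubgroup H :=
  img (g ⊓ A.prod (⊤ : AddSubgroup H))

lemma mem_relPreimg {g : AddSubgroup (G × H)} {B : AddSubgroup H} {a : G} :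
    a ∈ relPreimg g B ↔ ∃ b ∈ B, (a, b) ∈ g := by
  constructor
  · rintro ⟨⟨x, y⟩, ⟨hg, -, hy⟩, rfl⟩
    exact ⟨y, hy, hg⟩
  · rintro ⟨b, hb, hg⟩
    exact ⟨(a, b), ⟨hg, trivial, hb⟩, rfl⟩

lemma mem_relImg {g : AddSubgroup (G × H)} {A : AddSubgroup G} {h : H} :
    h ∈ relImg g A ↔ ∃ a ∈ A, (a, h) ∈ g := by
  constructor
  · rintro ⟨⟨x, y⟩, ⟨hg, hx, -⟩, rfl⟩
    exact ⟨x, hx, hg⟩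
  · rintro ⟨a, ha, hg⟩
    exact ⟨(a, h), ⟨hg, ha, trivial⟩, rfl⟩

lemma mem_img {g : AddSubgroup (G × H)} {h : H} :
    h ∈ img g ↔ ∃ a : G, (a, h) ∈ g := by
  constructor
  · rintro ⟨⟨x, y⟩, hg, rfl⟩
    exact ⟨x, hg⟩
  · rintro ⟨a, hg⟩
    exact ⟨(a, h), hg, rfl⟩

lemma relIndex_ne_zero_of_sep {H : Type*} [AddCommGroup H] {N B : AddSubgroup H}
    {Y : Type*} [Finite Y] (F : B → Y)
    (hF : ∀ x y : B, F x = F y → (x : H) - y ∈ N) : N.relIndex B ≠ 0 := by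
  have : Finite (B ⧸ N.addSubgroupOf B) := by
    apply Finite.of_injective (fun q : B ⧸ N.addSubgroupOf B => F q.out)
    intro x y h
    have hxy := hF _ _ h
    rw [← QuotientAddGroup.out_eq' x, ← QuotientAddGroup.out_eq' y, QuotientAddGroup.eq]
    have : (y.out : H) - x.out ∈ N := by
      have := N.neg_mem hxy
      rwa [neg_sub] at this
    rwa [AddSubgroup.mem_addSubgroupOf, AddSubgroup.coe_add, AddSubgroup.coe_neg,
      neg_add_eq_sub]
  exact AddSubgroup.index_ne_zero_of_finite

lemma finite_quot_of_relIndex_ne_zero {A₁ A₂ : AddSubgroup G} (h : A₁.relIndex A₂ ≠ 0) :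
    Finite (A₂ ⧸ A₁.addSubgroupOf A₂) := by
  rw [AddSubgroup.relIndex, AddSubgroup.index_eq_card] at h
  exact Nat.finite_of_card_ne_zero h

lemma key {G H : Type*} [AddCommGroup G] [AddCommGroup H] (R : AddSubgroup (G × H))
    (hcoker : ((coker R : Set H)).Finite) (himg : (img R).FiniteIndex)
    (B₁ B₂ : AddSubgroup H) (hle : B₁ ≤ B₂)
    (hA : (relPreimg R B₁).relIndex (relPreimg R B₂) ≠ 0) : B₁.relIndex B₂ ≠ 0 := by
  classical
  set A₁ := relPreimg R B₁ with hA₁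
  set A₂ := relPreimg R B₂ with hA₂
  set I := img R with hI
  set C := coker R with hC
  set T := B₁ ⊔ (B₂ ⊓ I) with hT
  have hfinC : Finite (C : Set H) := hcoker.to_subtype
  have hfinA : Finite (A₂ ⧸ A₁.addSubgroupOf A₂) := finite_quot_of_relIndex_ne_zero hA
  -- Step 1: `I` has finite relative index in `B₂`
  have h1 : I.relIndex B₂ ≠ 0 := by
    have : Finite (H ⧸ I) :=
      Nat.finite_of_card_ne_zero (by rw [← AddSubgroup.index_eq_card]; exact himg.index_ne_zero)
    exact relIndex_ne_zero_of_sep (fun b : B₂ => QuotientAddGroup.mk (b : H) : B₂ → H ⧸ I)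
      (by
        intro x y h
        have := (QuotientAddGroup.eq).mp h
        have h2 := I.neg_mem this
        rwa [neg_add_eq_sub, neg_sub] at h2)
  -- Step 2: `T` has finite relative index in `B₂`
  have h2 : T.relIndex B₂ ≠ 0 := by
    intro h0
    exact h1 (by
      rw [← AddSubgroup.inf_relIndex_left]
      exact AddSubgroup.relIndex_eq_zero_of_le_left le_sup_right h0)
  -- Step 3: `B₁ ⊔ C` has finite relative index in `T`
  have hsel : ∀ x : T, ∃ (b : H) (a : G), b ∈ B₁ ∧ a ∈ A₂ ∧ (a, (x : H) - b) ∈ R := by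
    rintro ⟨x, hx⟩
    rw [hT, AddSubgroup.mem_sup] at hx
    obtain ⟨b, hb, t, ht, hbt⟩ := hx
    obtain ⟨a, haR⟩ := mem_img.mp ht.2
    refine ⟨b, a, hb, mem_relPreimg.mpr ⟨t, ht.1, haR⟩, ?_⟩
    simpa [← hbt] using haR
  choose bF aF hbF haF hRF using hsel
  have h3 : (B₁ ⊔ C).relIndex T ≠ 0 := by
    apply relIndex_ne_zero_of_sep
      (fun x : T => (QuotientAddGroup.mk ⟨aF x, haF x⟩ : A₂ ⧸ A₁.addSubgroupOf A₂))
    intro x y h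
    have hmem : aF y - aF x ∈ A₁ := by
      have := (QuotientAddGroup.eq).mp h
      rw [AddSubgroup.mem_addSubgroupOf] at this
      simpa [neg_add_eq_sub] using this
    obtain ⟨u, hu, hur⟩ := mem_relPreimg.mp hmem
    have hzero : ((0 : G), (((y : H) - bF y) - ((x : H) - bF x) - u)) ∈ R := by
      have := R.sub_mem (R.sub_mem (hRF y) (hRF x)) hur
      simpa using this
    have hcmem : (((y : H) - bF y) - ((x : H) - bF x) - u) ∈ C := hzero
    have : (y : H) - x ∈ B₁ ⊔ C := by
      have hb : bF y - bF x + u ∈ B₁ ⊔ C :=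
        AddSubgroup.mem_sup_left (B₁.add_mem (B₁.sub_mem (hbF y) (hbF x)) hu)
      have hc : (((y : H) - bF y) - ((x : H) - bF x) - u) ∈ B₁ ⊔ C :=
        AddSubgroup.mem_sup_right hcmem
      have := AddSubgroup.add_mem _ hb hc
      convert this using 1
      abel
    have := AddSubgroup.neg_mem _ this
    rwa [neg_sub] at this
  -- Step 4: `B₁` has finite relative index in `(B₁ ⊔ C) ⊓ T`
  have hsel2 : ∀ x : ((B₁ ⊔ C) ⊓ T : AddSubgroup H), ∃ c : H, c ∈ C ∧ (x : H) - c ∈ B₁ := by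
    rintro ⟨x, hx⟩
    rw [AddSubgroup.mem_inf, AddSubgroup.mem_sup] at hx
    obtain ⟨⟨b, hb, c, hc, hbc⟩, -⟩ := hx
    exact ⟨c, hc, by simpa [← hbc] using hb⟩
  choose cF hcF hbcF using hsel2
  have h4 : B₁.relIndex ((B₁ ⊔ C) ⊓ T) ≠ 0 := by
    apply relIndex_ne_zero_of_sep
      (fun x : ((B₁ ⊔ C) ⊓ T : AddSubgroup H) => (⟨cF x, hcF x⟩ : (C : Set H)))
    intro x y h
    have hc : cF x = cF y := congrArg Subtype.val h
    have := B₁.sub_mem (hbcF x) (hbcF y)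
    rw [hc] at this
    simpa using this
  -- Combine
  have h5 : ((B₁ ⊔ C) ⊓ T).relIndex T ≠ 0 := by
    rw [AddSubgroup.inf_relIndex_right]
    exact h3
  have hchain1 : B₁.relIndex T ≠ 0 := by
    rw [← AddSubgroup.relIndex_mul_relIndex B₁ ((B₁ ⊔ C) ⊓ T) T
      (le_inf le_sup_left le_sup_left) inf_le_right]
    exact mul_ne_zero h4 h5
  rw [← AddSubgroup.relIndex_mul_relIndex B₁ T B₂ le_sup_left
    (sup_le hle inf_le_left)]
  exact mul_ne_zero hchain1 h2

/-- The opposite (swapped) relation. -/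
def swapRel (f : AddSubgroup (G × H)) : AddSubgroup (H × G) :=
  f.map (AddEquiv.prodComm : G × H ≃+ H × G).toAddMonoidHom

lemma mem_swapRel {f : AddSubgroup (G × H)} {h : H} {a : G} :
    (h, a) ∈ swapRel f ↔ (a, h) ∈ f := by
  constructor
  · rintro ⟨⟨x, y⟩, hx, hxy⟩
    obtain ⟨rfl, rfl⟩ : y = h ∧ x = a := by
      simpa [AddEquiv.prodComm, Prod.ext_iff] using hxy
    exact hx
  · intro hf
    exact ⟨(a, h), hf, rfl⟩

lemma relPreimg_swapRel (f : AddSubgroup (G × H)) (A : AddSubgroup G) :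
    relPreimg (swapRel f) A = relImg f A := by
  ext h
  rw [mem_relPreimg, mem_relImg]
  exact exists_congr fun a => and_congr_right fun _ => mem_swapRel

lemma coker_swapRel (f : AddSubgroup (G × H)) : coker (swapRel f) = ker f := by
  ext a
  exact mem_swapRel

lemma img_swapRel (f : AddSubgroup (G × H)) : img (swapRel f) = dom f := by
  ext a
  constructor
  · rintro ⟨⟨x, y⟩, hx, rfl⟩
    exact ⟨(y, x), mem_swapRel.mp hx, rfl⟩
  · rintro ⟨⟨x, y⟩, hx, rfl⟩
    exact ⟨(y, x), mem_swapRel.mpr hx, rfl⟩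

lemma relPreimg_mono (g : AddSubgroup (G × H)) {B₁ B₂ : AddSubgroup H} (h : B₁ ≤ B₂) :
    relPreimg g B₁ ≤ relPreimg g B₂ := by
  intro a ha
  obtain ⟨b, hb, hg⟩ := mem_relPreimg.mp ha
  exact mem_relPreimg.mpr ⟨b, h hb, hg⟩

/-- if `coker g` is finite, `im g` has finite index in `H`, `ker f` is
finite and `dom f` has finite index in `G`, and `H₁ ≤ H₂ ≤ H` with `H₁` of infinite index
in `H₂`, then `f[g⁻¹[H₁]]` has infinite index in `f[g⁻¹[H₂]]`. -/
theorem relImg_relPreimg_infinite_relindex (f g : AddSubgroup (G × H))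
    (hcoker : ((coker g : Set H)).Finite) (himg : (img g).FiniteIndex)
    (hker : ((ker f : Set G)).Finite) (hdom : (dom f).FiniteIndex)
    (H₁ H₂ : AddSubgroup H) (hle : H₁ ≤ H₂) (hidx : H₁.relIndex H₂ = 0) :
    (relImg f (relPreimg g H₁)).relIndex (relImg f (relPreimg g H₂)) = 0 := by
  by_contra hne
  have hA : (relPreimg g H₁).relIndex (relPreimg g H₂) ≠ 0 := by
    refine key (swapRel f) ?_ ?_ _ _ (relPreimg_mono g hle) ?_
    · rw [coker_swapRel]; exact hker
    · rw [img_swapRel]; exact hdom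
    · rw [relPreimg_swapRel, relPreimg_swapRel]; exact hne
  exact key g hcoker himg H₁ H₂ hle hA hidx

end QH
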